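/- Fix n, angles θ_enc ∈ (0, π) with θ_enc ∉ π·ℚ and θ_ent ∉ π·ℚ. For a simple graph K on [n] with max degree d_max(K) > 0, define the one-repetition pre-mixer state ψ_K : {0,1}^n → ℂ by ψ_K(s) = exp(iθ_ent·cut_K(s)) · exp(−i(θ_ent/2)|E_K|) · ∏_{i:s_i=0} cos α_i^K · ∏_{i:s_i=1} (−i sin α_i^K), where α_i^K = (θ_enc/2)·deg_K(i)/d_max(K). If G, H are simple graphs on [n] with positive maximum degree and ψ_G = ψ_H as functions, then G = H. -/

import Mathlib

open Finset


/-- The number of edges of `K` cut by the bit assignment `s`. -/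
def cutCount {n : ℕ} (K : SimpleGraph (Fin n)) [DecidableRel K.Adj]
    (s : Fin n → Bool) : ℕ :=
  (K.edgeFinset.filter fun e => s e.inf ≠ s e.sup).card

/-- Maximum degree of `K`. -/
def maxDegree {n : ℕ} (K : SimpleGraph (Fin n)) [DecidableRel K.Adj] : ℕ :=
  Finset.univ.sup (fun v => K.degree v)

/-- Encoding angle of vertex `i` for graph `K`. -/
noncomputable def encAngle {n : ℕ} (K : SimpleGraph (Fin n))
    [DecidableRel K.Adj] (θenc : ℝ) (i : Fin n) : ℝ :=
  (θenc / 2) * (K.degree i : ℝ) / (maxDegree K : ℝ)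

/-- The one-repetition pre-mixer state of `K`. -/
noncomputable def psi {n : ℕ} (K : SimpleGraph (Fin n)) [DecidableRel K.Adj]
    (θenc θent : ℝ) (s : Fin n → Bool) : ℂ :=
  Complex.exp (Complex.I * θent * (cutCount K s : ℂ)) *
    Complex.exp (-Complex.I * (θent / 2) * (K.edgeFinset.card : ℂ)) *
    ∏ i, (if s i then -Complex.I * (Real.sin (encAngle K θenc i) : ℂ)
      else (Real.cos (encAngle K θenc i) : ℂ))

lemma bool_inf_sup_ne {α : Type*} [LinearOrder α] (s : α → Bool) (a b : α) :
    (s (a ⊓ b) ≠ s (a ⊔ b)) ↔ s a ≠ s b := by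
  rcases le_total a b with h | h
  · rw [inf_eq_left.2 h, sup_eq_right.2 h]
  · rw [inf_eq_right.2 h, sup_eq_left.2 h, ne_comm]

variable {n : ℕ} (K : SimpleGraph (Fin n)) [DecidableRel K.Adj]

lemma cutCount_false : cutCount K (fun _ => false) = 0 := by
  simp [cutCount]

lemma sym2_inf_mem (e : Sym2 (Fin n)) : e.inf ∈ e := by
  induction e using Sym2.ind with
  | _ a b =>
    rw [Sym2.inf_mk, Sym2.mem_iff]
    rcases le_total a b with h | h
    · left; rw [inf_eq_left.2 h]
    · right; rw [inf_eq_right.2 h]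

lemma sym2_sup_mem (e : Sym2 (Fin n)) : e.sup ∈ e := by
  induction e using Sym2.ind with
  | _ a b =>
    rw [Sym2.sup_mk, Sym2.mem_iff]
    rcases le_total a b with h | h
    · right; rw [sup_eq_right.2 h]
    · left; rw [sup_eq_left.2 h]

lemma cutCount_congr {s t : Fin n → Bool}
    (hst : ∀ e ∈ K.edgeFinset, ∀ a ∈ e, s a = t a) :
    cutCount K s = cutCount K t := by
  unfold cutCount
  congr 1
  apply Finset.filter_congr
  intro e he
  rw [hst e he _ (sym2_inf_mem e), hst e he _ (sym2_sup_mem e)]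

lemma deg_pos_of_mem_edge {e : Sym2 (Fin n)} {a : Fin n}
    (he : e ∈ K.edgeFinset) (ha : a ∈ e) : 0 < K.degree a := by
  rw [SimpleGraph.mem_edgeFinset] at he
  induction e using Sym2.ind with
  | _ x y =>
    rw [SimpleGraph.mem_edgeSet] at he
    rw [Sym2.mem_iff] at ha
    rw [K.degree_pos_iff_exists_adj]
    rcases ha with rfl | rfl
    · exact ⟨y, he⟩
    · exact ⟨x, he.symm⟩

lemma cutCount_single (i : Fin n) :
    cutCount K (fun j => j == i) = K.degree i := by
  unfold cutCount
  rw [← SimpleGraph.card_incidenceFinset_eq_degree]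
  congr 1
  ext e
  rw [SimpleGraph.mem_incidenceFinset]
  induction e using Sym2.ind with
  | _ a b =>
    simp only [Finset.mem_filter, SimpleGraph.mem_edgeFinset, Sym2.inf_mk, Sym2.sup_mk,
      SimpleGraph.mk'_mem_incidenceSet_iff]
    have hflip : ((a ⊓ b == i) ≠ (a ⊔ b == i)) ↔ ((a == i) ≠ (b == i)) :=
      bool_inf_sup_ne (fun j => j == i) a b
    rw [hflip]
    constructor
    · rintro ⟨he, hne⟩
      rw [SimpleGraph.mem_edgeSet] at he
      have hab := he.ne
      refine ⟨he, ?_⟩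
      by_cases hai : a = i <;> by_cases hbi : b = i <;> simp_all
    · rintro ⟨he, hm⟩
      have hab := he.ne
      refine ⟨K.mem_edgeSet.2 he, ?_⟩
      rcases hm with rfl | rfl
      · simp [Ne.symm hab]
      · simp [hab]

lemma cutCount_pair {u v : Fin n} (huv : u ≠ v) :
    cutCount K (fun j => j == u || j == v) + 2 * (if K.Adj u v then 1 else 0)
      = K.degree u + K.degree v := by
  classical
  set A := K.edgeFinset.filter (fun e => u ∈ e) with hA
  set B := K.edgeFinset.filter (fun e => v ∈ e) with hB
  set D := K.edgeFinset.filter (fun e => u ∈ e ∧ v ∈ e) with hD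
  have hAcard : A.card = K.degree u := by
    rw [← SimpleGraph.card_incidenceFinset_eq_degree]
    congr 1
    ext e
    simp [hA, SimpleGraph.mem_incidenceFinset, SimpleGraph.incidenceSet,
      SimpleGraph.mem_edgeFinset, and_comm]
  have hBcard : B.card = K.degree v := by
    rw [← SimpleGraph.card_incidenceFinset_eq_degree]
    congr 1
    ext e
    simp [hB, SimpleGraph.mem_incidenceFinset, SimpleGraph.incidenceSet,
      SimpleGraph.mem_edgeFinset, and_comm]
  have hDcard : D.card = if K.Adj u v then 1 else 0 := by
    have : D = if K.Adj u v then {s(u, v)} else ∅ := by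
      ext e
      simp only [hD, Finset.mem_filter, SimpleGraph.mem_edgeFinset]
      rw [Sym2.mem_and_mem_iff huv]
      by_cases hadj : K.Adj u v
      · rw [if_pos hadj]
        simp only [Finset.mem_singleton]
        constructor
        · rintro ⟨-, rfl⟩; rfl
        · rintro rfl; exact ⟨K.mem_edgeSet.2 hadj, rfl⟩
      · rw [if_neg hadj]
        simp only [Finset.notMem_empty, iff_false, not_and]
        rintro he rfl
        exact hadj (K.mem_edgeSet.1 he)
    rw [this]
    split <;> simp
  have hAB : A ∩ B = D := by
    ext e; simp [hA, hB, hD, and_assoc, and_left_comm]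
  have hC : (K.edgeFinset.filter
      fun e => (fun j => j == u || j == v) e.inf ≠ (fun j => j == u || j == v) e.sup)
      = (A ∪ B) \ D := by
    ext e
    simp only [Finset.mem_sdiff, Finset.mem_union, Finset.mem_filter, hA, hB, hD]
    induction e using Sym2.ind with
    | _ a b =>
      by_cases he : s(a, b) ∈ K.edgeFinset
      · have hab : a ≠ b := (K.mem_edgeSet.1 (SimpleGraph.mem_edgeFinset.1 he)).ne
        simp only [he, true_and, Sym2.inf_mk, Sym2.sup_mk, not_and, Sym2.mem_iff]
        have hflip : ((a ⊓ b == u || a ⊓ b == v) ≠ (a ⊔ b == u || a ⊔ b == v)) ↔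
            ((a == u || a == v) ≠ (b == u || b == v)) :=
          bool_inf_sup_ne (fun j => j == u || j == v) a b
        rw [hflip]
        clear hflip
        by_cases hau : u = a <;> by_cases hbu2 : u = b <;> by_cases hav : v = a <;>
          by_cases hbv : v = b <;> subst_vars <;> simp_all <;>
          first
            | (constructor <;> (intro hh; subst hh; simp_all))
            | (intro hh; subst hh; simp_all)
            | (simp [beq_eq_false_iff_ne.2 (fun hh => hau hh.symm),
                beq_eq_false_iff_ne.2 (fun hh => hav hh.symm),
                beq_eq_false_iff_ne.2 (fun hh => hbu2 hh.symm),
                beq_eq_false_iff_ne.2 (fun hh => hbv hh.symm)])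
      · simp [he]
  have hsub : D ⊆ A ∪ B := by
    rw [← hAB]; exact Finset.inter_subset_union
  have h1 : ((A ∪ B) \ D).card + D.card = (A ∪ B).card := Finset.card_sdiff_add_card_eq_card hsub
  have h2 : (A ∪ B).card + (A ∩ B).card = A.card + B.card := Finset.card_union_add_card_inter A B
  rw [hAB] at h2
  unfold cutCount
  rw [hC]
  omega


section analytic

lemma exp_inj {θ : ℝ} (hθ : Irrational (θ / Real.pi)) {r t : ℚ}
    (h : Complex.exp (((θ * (r : ℝ) : ℝ) : ℂ) * Complex.I)
       = Complex.exp (((θ * (t : ℝ) : ℝ) : ℂ) * Complex.I)) : r = t := by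
  by_contra hrt
  rw [Complex.exp_eq_exp_iff_exists_int] at h
  obtain ⟨k, hk⟩ := h
  have h2 : ((θ * (r : ℝ) : ℝ) : ℂ) * Complex.I
      = ((θ * (t : ℝ) + (k : ℝ) * (2 * Real.pi) : ℝ) : ℂ) * Complex.I := by
    push_cast at hk ⊢
    linear_combination hk
  have h3 := mul_right_cancel₀ Complex.I_ne_zero h2
  have h4 : θ * (r : ℝ) = θ * (t : ℝ) + (k : ℝ) * (2 * Real.pi) := by exact_mod_cast h3
  have hπ := Real.pi_ne_zero
  have hrt2 : ((r : ℝ) - t) ≠ 0 := sub_ne_zero.2 (by exact_mod_cast hrt)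
  apply hθ
  refine ⟨(2 * k) / (r - t), ?_⟩
  push_cast
  rw [div_eq_div_iff (by exact hrt2) hπ]
  linear_combination (-1 : ℝ) * h4

variable {n : ℕ} (K : SimpleGraph (Fin n)) [DecidableRel K.Adj] {θenc θent : ℝ}

lemma psi_eq (θenc θent : ℝ) (s : Fin n → Bool) :
    psi K θenc θent s
      = Complex.exp (((θent * ((((cutCount K s : ℚ) - (K.edgeFinset.card : ℚ) / 2 : ℚ)) : ℝ) : ℝ) : ℂ)
            * Complex.I) *
        ∏ i, (if s i then -Complex.I * (Real.sin (encAngle K θenc i) : ℂ)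
          else (Real.cos (encAngle K θenc i) : ℂ)) := by
  rw [psi, ← Complex.exp_add]
  congr 1
  push_cast
  ring

lemma encAngle_nonneg (hθ0 : 0 < θenc) (i : Fin n) : 0 ≤ encAngle K θenc i := by
  unfold encAngle
  positivity

lemma encAngle_le (hK : 0 < maxDegree K) (hθ0 : 0 < θenc) (i : Fin n) :
    encAngle K θenc i ≤ θenc / 2 := by
  have hd : (K.degree i : ℝ) ≤ (maxDegree K : ℝ) :=
    Nat.cast_le.2 (Finset.le_sup (f := fun v => K.degree v) (Finset.mem_univ i))
  have hm : (0 : ℝ) < (maxDegree K : ℝ) := by exact_mod_cast hK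
  rw [encAngle, mul_div_assoc]
  nth_rewrite 2 [show θenc / 2 = θenc / 2 * 1 by ring]
  gcongr
  rw [div_le_one hm]
  exact hd

lemma encAngle_lt_pi_div_two (hK : 0 < maxDegree K) (hθ0 : 0 < θenc)
    (hθπ : θenc < Real.pi) (i : Fin n) : encAngle K θenc i < Real.pi / 2 := by
  have := encAngle_le K hK hθ0 i
  linarith

lemma encAngle_pos_iff (hK : 0 < maxDegree K) (hθ0 : 0 < θenc) (i : Fin n) :
    0 < encAngle K θenc i ↔ 0 < K.degree i := by
  have hm : (0 : ℝ) < (maxDegree K : ℝ) := by exact_mod_cast hK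
  rw [encAngle]
  constructor
  · intro hpos
    by_contra hd
    push_neg at hd
    interval_cases hdeg : K.degree i
    simp [hdeg] at hpos
  · intro hd
    have : (0 : ℝ) < (K.degree i : ℝ) := by exact_mod_cast hd
    positivity

lemma cos_encAngle_pos (hK : 0 < maxDegree K) (hθ0 : 0 < θenc) (hθπ : θenc < Real.pi)
    (i : Fin n) : 0 < Real.cos (encAngle K θenc i) := by
  apply Real.cos_pos_of_mem_Ioo
  constructor
  · have := encAngle_nonneg K hθ0 i
    have := Real.pi_pos
    linarith
  · exact encAngle_lt_pi_div_two K hK hθ0 hθπ i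

lemma abs_psi (hK : 0 < maxDegree K) (hθ0 : 0 < θenc) (hθπ : θenc < Real.pi)
    (θent : ℝ) (s : Fin n → Bool) :
    ‖psi K θenc θent s‖
      = ∏ i, (if s i then Real.sin (encAngle K θenc i) else Real.cos (encAngle K θenc i)) := by
  rw [psi_eq, norm_mul, Complex.norm_exp_ofReal_mul_I, one_mul, norm_prod]
  refine Finset.prod_congr rfl fun i _ => ?_
  have hpi := Real.pi_pos
  have h0 := encAngle_nonneg K hθ0 i
  have h1 := encAngle_lt_pi_div_two K hK hθ0 hθπ i
  by_cases hs : s i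
  · rw [if_pos hs, if_pos hs, norm_mul]
    have hsin : 0 ≤ Real.sin (encAngle K θenc i) :=
      Real.sin_nonneg_of_nonneg_of_le_pi h0 (by linarith)
    rw [norm_neg, Complex.norm_I, one_mul, Complex.norm_real, Real.norm_eq_abs,
      abs_of_nonneg hsin]
  · rw [if_neg hs, if_neg hs]
    have hcos := cos_encAngle_pos K hK hθ0 hθπ i
    rw [Complex.norm_real, Real.norm_eq_abs, abs_of_nonneg hcos.le]

lemma prod_ite_single (f g : Fin n → ℝ) (i : Fin n) :
    ∏ j, (if j = i then f j else g j) = f i * ∏ j ∈ Finset.univ.erase i, g j := by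
  rw [← Finset.mul_prod_erase Finset.univ _ (Finset.mem_univ i), if_pos rfl]
  exact congrArg _ (Finset.prod_congr rfl fun j hj => if_neg (Finset.ne_of_mem_erase hj))

end analytic

theorem one_repetition_injectivity {n : ℕ}
    (G H : SimpleGraph (Fin n)) [DecidableRel G.Adj] [DecidableRel H.Adj]
    (θenc θent : ℝ) (hθenc0 : 0 < θenc) (hθencπ : θenc < Real.pi)
    (hθenc : Irrational (θenc / Real.pi)) (hθent : Irrational (θent / Real.pi))
    (hG : 0 < maxDegree G) (hH : 0 < maxDegree H)
    (h : ∀ s : Fin n → Bool, psi G θenc θent s = psi H θenc θent s) :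
    G = H := by
  classical
  have hpi := Real.pi_pos
  have habs : ∀ s : Fin n → Bool,
      (∏ i, (if s i then Real.sin (encAngle G θenc i) else Real.cos (encAngle G θenc i)))
        = ∏ i, (if s i then Real.sin (encAngle H θenc i) else Real.cos (encAngle H θenc i)) := by
    intro s
    have := congrArg (fun z : ℂ => ‖z‖) (h s)
    rwa [abs_psi G hG hθenc0 hθencπ, abs_psi H hH hθenc0 hθencπ] at this
  -- Step 1: the encoding angles coincide.
  have hAngle : ∀ i, encAngle G θenc i = encAngle H θenc i := by
    intro i
    have h0 := habs (fun _ => false)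
    simp only [Bool.false_eq_true, if_false] at h0
    have h1 := habs (fun j => j == i)
    simp only [beq_iff_eq] at h1
    rw [prod_ite_single (fun j => Real.sin (encAngle G θenc j)) (fun j => Real.cos (encAngle G θenc j)),
      prod_ite_single (fun j => Real.sin (encAngle H θenc j)) (fun j => Real.cos (encAngle H θenc j))] at h1
    rw [← Finset.mul_prod_erase Finset.univ _ (Finset.mem_univ i),
      ← Finset.mul_prod_erase Finset.univ (fun j => Real.cos (encAngle H θenc j)) (Finset.mem_univ i)] at h0
    set gi := encAngle G θenc i
    set hi := encAngle H θenc i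
    set Pg := ∏ j ∈ Finset.univ.erase i, Real.cos (encAngle G θenc j) with hPgdef
    set Ph := ∏ j ∈ Finset.univ.erase i, Real.cos (encAngle H θenc j) with hPhdef
    have hPg : 0 < Pg := Finset.prod_pos fun j _ => cos_encAngle_pos G hG hθenc0 hθencπ j
    have hPh : 0 < Ph := Finset.prod_pos fun j _ => cos_encAngle_pos H hH hθenc0 hθencπ j
    have key : Real.sin gi * Real.cos hi = Real.sin hi * Real.cos gi := by
      have h3 : Real.sin gi * Real.cos hi * Ph = Real.sin hi * Real.cos gi * Ph := by
        linear_combination Real.cos gi * h1 - Real.sin gi * h0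
      exact mul_right_cancel₀ hPh.ne' h3
    have hsin : Real.sin (gi - hi) = 0 := by
      rw [Real.sin_sub]
      linear_combination key
    have hg0 := encAngle_nonneg G hθenc0 i
    have hh0 := encAngle_nonneg H hθenc0 i
    have hg1 := encAngle_lt_pi_div_two G hG hθenc0 hθencπ i
    have hh1 := encAngle_lt_pi_div_two H hH hθenc0 hθencπ i
    have := (Real.sin_eq_zero_iff_of_lt_of_lt (by linarith) (by linarith)).1 hsin
    linarith
  -- Step 2: zero-degree vertices coincide.
  have hdeg0 : ∀ i, 0 < G.degree i ↔ 0 < H.degree i := by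
    intro i
    rw [← encAngle_pos_iff G hG hθenc0 i, ← encAngle_pos_iff H hH hθenc0 i, hAngle i]
  -- Step 3: common amplitude factor.
  have hP : ∀ s : Fin n → Bool,
      (∏ i, (if s i then -Complex.I * (Real.sin (encAngle G θenc i) : ℂ)
        else (Real.cos (encAngle G θenc i) : ℂ)))
      = ∏ i, (if s i then -Complex.I * (Real.sin (encAngle H θenc i) : ℂ)
        else (Real.cos (encAngle H θenc i) : ℂ)) := by
    intro s
    exact Finset.prod_congr rfl fun i _ => by rw [hAngle i]
  -- Step 4: phase comparison on supported bitstrings.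
  have hPhase : ∀ s : Fin n → Bool, (∀ i, s i = true → 0 < G.degree i) →
      (cutCount G s : ℚ) - (G.edgeFinset.card : ℚ) / 2
        = (cutCount H s : ℚ) - (H.edgeFinset.card : ℚ) / 2 := by
    intro s hs
    have hne : (∏ i, (if s i then -Complex.I * (Real.sin (encAngle H θenc i) : ℂ)
        else (Real.cos (encAngle H θenc i) : ℂ))) ≠ 0 := by
      rw [Finset.prod_ne_zero_iff]
      intro i _
      by_cases hsi : s i
      · rw [if_pos hsi]
        refine mul_ne_zero (by simp [Complex.I_ne_zero]) ?_
        simp only [ne_eq, Complex.ofReal_eq_zero]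
        have hd : 0 < H.degree i := (hdeg0 i).1 (hs i hsi)
        have hpos : 0 < encAngle H θenc i := (encAngle_pos_iff H hH hθenc0 i).2 hd
        have hlt := encAngle_lt_pi_div_two H hH hθenc0 hθencπ i
        have := Real.sin_pos_of_pos_of_lt_pi hpos (by linarith)
        linarith
      · rw [if_neg hsi]
        simp only [ne_eq, Complex.ofReal_eq_zero]
        have := cos_encAngle_pos H hH hθenc0 hθencπ i
        linarith
    have hh := h s
    rw [psi_eq G θenc θent s, psi_eq H θenc θent s, hP s] at hh
    exact exp_inj hθent (mul_right_cancel₀ hne hh)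
  -- Step 5: edge counts coincide.
  have hE : G.edgeFinset.card = H.edgeFinset.card := by
    have h0 := hPhase (fun _ => false) (by simp)
    rw [cutCount_false, cutCount_false] at h0
    have : (G.edgeFinset.card : ℚ) = (H.edgeFinset.card : ℚ) := by push_cast at h0 ⊢; linarith
    exact_mod_cast this
  -- Step 6: cut counts coincide for all bitstrings.
  have hcut : ∀ s : Fin n → Bool, cutCount G s = cutCount H s := by
    intro s
    set t := fun j => s j && decide (0 < G.degree j) with ht
    have hts : ∀ i, t i = true → 0 < G.degree i := by
      intro i hi
      rw [ht, Bool.and_eq_true, decide_eq_true_eq] at hi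
      exact hi.2
    have h1 : cutCount G s = cutCount G t := by
      refine cutCount_congr G fun e he a ha => ?_
      have := deg_pos_of_mem_edge G he ha
      simp [ht, this]
    have h2 : cutCount H s = cutCount H t := by
      refine cutCount_congr H fun e he a ha => ?_
      have hd := deg_pos_of_mem_edge H he ha
      have : 0 < G.degree a := (hdeg0 a).2 hd
      simp [ht, this]
    have h3 := hPhase t hts
    rw [hE] at h3
    have h4 : (cutCount G t : ℚ) = cutCount H t := by linarith
    have h5 : cutCount G t = cutCount H t := by exact_mod_cast h4
    rw [h1, h2, h5]
  -- Step 7: degrees coincide.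
  have hdeg : ∀ i, G.degree i = H.degree i := by
    intro i
    rw [← cutCount_single G i, ← cutCount_single H i]
    exact hcut _
  -- Step 8: adjacency coincides.
  ext u v
  by_cases huv : u = v
  · subst huv
    simp
  · have c1 := cutCount_pair G huv
    have c2 := cutCount_pair H huv
    rw [hdeg u, hdeg v, hcut (fun j => j == u || j == v)] at c1
    have hiff : (if G.Adj u v then 1 else 0) = (if H.Adj u v then 1 else 0) := by omega
    by_cases h1 : G.Adj u v <;> by_cases h2 : H.Adj u v <;> simp_all
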